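/- arXiv:2008.06878 — 3 statements merged into one kernel-verified Lean document; each statement's English description precedes it below -/
import Mathlib

section
/- If ε is an infinitesimal element of the field of Hahn series ℝ((Γ)) (i.e., ε ≺ 1), then the geometric series Σ_{n∈ℕ} (-1)^n ε^n is summable (the family has pointwise finite and well-ordered combined support) and its sum equals the multiplicative inverse of 1 + ε. -/
open HahnSeries

variable {Γ : Type*} [AddCommGroup Γ] [LinearOrder Γ] [IsOrderedAddMonoid Γ]

/-- For an infinitesimal Hahn series `ε` (nonzero with strictly positive order), the
geometric series `Σ (-1)^n ε^n` is summable and its sum is the inverse of `1 + ε`. -/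
theorem geometric_series_inverse (ε : HahnSeries Γ ℝ) (hε : ε ≠ 0) (hord : 0 < ε.order) :
    ∃ S : SummableFamily Γ ℝ ℕ,
      (∀ n : ℕ, S n = (-1 : ℝ) ^ n • ε ^ n) ∧ S.hsum = (1 + ε)⁻¹ := by
  have hot : 0 < (-ε).orderTop := by
    rw [orderTop_neg, ← order_eq_orderTop_of_ne_zero hε]
    exact_mod_cast hord
  refine ⟨SummableFamily.powers (-ε), ?_, ?_⟩
  · intro n
    rw [SummableFamily.powers_of_orderTop_pos hot, ← neg_one_smul ℝ ε, smul_pow]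
  · have h := SummableFamily.one_sub_self_mul_hsum_powers hot
    rw [sub_neg_eq_add] at h
    exact (inv_eq_of_mul_eq_one_right h).symm
end

section
/- Every real closed field admits a group of monomials: there is a multiplicative subgroup M of the positive elements such that each nonzero element is Archimedean-equivalent to exactly one element of M (equivalently, the natural valuation admits a section on the value group). -/
/-- `f ⪯ g`: `f` is dominated by `g`. -/
def Dom {K : Type*} [Field K] [LinearOrder K] [IsStrictOrderedRing K] (f g : K) : Prop :=
  ∃ n : ℕ, |f| ≤ n * |g|

/-- `f ≍ g`: `f` and `g` are in the same Archimedean class. -/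
def Asymp {K : Type*} [Field K] [LinearOrder K] [IsStrictOrderedRing K] (f g : K) : Prop :=
  Dom f g ∧ Dom g f

section Aux

variable {K : Type*} [Field K] [LinearOrder K] [IsStrictOrderedRing K]

lemma Dom.refl (f : K) : Dom f f := ⟨1, by simp⟩

lemma Dom.trans {f g h : K} : Dom f g → Dom g h → Dom f h := by
  rintro ⟨n, hn⟩ ⟨k, hk⟩
  refine ⟨n * k, ?_⟩
  calc |f| ≤ n * |g| := hn
    _ ≤ n * (k * |h|) := by
        apply mul_le_mul_of_nonneg_left hk (by positivity)
    _ = (n * k : ℕ) * |h| := by push_cast; ring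

lemma Asymp.refl (f : K) : Asymp f f := ⟨Dom.refl f, Dom.refl f⟩

lemma Asymp.symm {f g : K} (h : Asymp f g) : Asymp g f := ⟨h.2, h.1⟩

lemma Asymp.trans {f g h : K} (h1 : Asymp f g) (h2 : Asymp g h) : Asymp f h :=
  ⟨h1.1.trans h2.1, h2.2.trans h1.2⟩

lemma Dom.mul {f g f' g' : K} : Dom f g → Dom f' g' → Dom (f * f') (g * g') := by
  rintro ⟨n, hn⟩ ⟨k, hk⟩
  refine ⟨n * k, ?_⟩
  rw [abs_mul, abs_mul]
  calc |f| * |f'| ≤ (n * |g|) * (k * |g'|) :=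
        mul_le_mul hn hk (abs_nonneg _) (by positivity)
    _ = (n * k : ℕ) * (|g| * |g'|) := by push_cast; ring

lemma Asymp.mul {f g f' g' : K} (h : Asymp f g) (h' : Asymp f' g') :
    Asymp (f * f') (g * g') := ⟨h.1.mul h'.1, h.2.mul h'.2⟩

lemma Asymp.of_mul_right {a b c : K} (hc : c ≠ 0) (h : Asymp (a * c) (b * c)) :
    Asymp a b := by
  have := h.mul (Asymp.refl c⁻¹)
  rwa [mul_inv_cancel_right₀ hc, mul_inv_cancel_right₀ hc] at this

lemma Dom.inv {a b : K} (ha : a ≠ 0) (hb : b ≠ 0) (h : Dom a b) : Dom b⁻¹ a⁻¹ := by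
  obtain ⟨n, hn⟩ := h
  have ha' : (0 : K) < |a| := abs_pos.mpr ha
  have hb' : (0 : K) < |b| := abs_pos.mpr hb
  refine ⟨n, ?_⟩
  rw [abs_inv, abs_inv]
  have key : |b|⁻¹ * |a| ≤ (n : K) := by
    calc |b|⁻¹ * |a| ≤ |b|⁻¹ * (n * |b|) :=
          mul_le_mul_of_nonneg_left hn (by positivity)
      _ = n := by field_simp
  calc |b|⁻¹ = |b|⁻¹ * |a| * |a|⁻¹ := by field_simp
    _ ≤ n * |a|⁻¹ := mul_le_mul_of_nonneg_right key (by positivity)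

lemma Asymp.inv {a b : K} (ha : a ≠ 0) (hb : b ≠ 0) (h : Asymp a b) :
    Asymp a⁻¹ b⁻¹ := ⟨h.2.inv hb ha, h.1.inv ha hb⟩

lemma Asymp.pow {a b : K} (h : Asymp a b) (n : ℕ) : Asymp (a ^ n) (b ^ n) := by
  induction n with
  | zero => simpa using Asymp.refl (1 : K)
  | succ n ih => rw [pow_succ, pow_succ]; exact ih.mul h

lemma asymp_abs (f : K) : Asymp f |f| := ⟨⟨1, by simp⟩, ⟨1, by simp [abs_abs]⟩⟩

/-- If `g > 0` and `g ^ n ≍ 1` for some `n ≥ 1`, then `g ≍ 1`. -/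
lemma asymp_one_of_pow {g : K} (hg : 0 < g) {n : ℕ} (hn : n ≠ 0)
    (h : Asymp (g ^ n) 1) : Asymp g 1 := by
  have key : ∀ x : K, 1 ≤ x → Asymp (x ^ n) 1 → Asymp x 1 := by
    intro x hx hxn
    constructor
    · obtain ⟨C, hC⟩ := hxn.1
      refine ⟨C, ?_⟩
      have h1 : x ≤ x ^ n := le_self_pow₀ hx hn
      have h2 : |x ^ n| = x ^ n := abs_of_pos (by positivity)
      have h3 : |x| = x := abs_of_pos (by linarith)
      rw [h3]; rw [h2] at hC; linarith
    · exact ⟨1, by rw [abs_of_pos (by linarith : (0:K) < x)]; simpa using hx⟩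
  rcases le_total 1 g with h1 | h1
  · exact key g h1 h
  · have hg' : 1 ≤ g⁻¹ := (one_le_inv₀ hg).mpr h1
    have hpow : Asymp ((g⁻¹) ^ n) 1 := by
      rw [inv_pow]
      simpa using h.inv (by positivity) one_ne_zero
    have h2 := (key g⁻¹ hg' hpow).inv (by positivity) one_ne_zero
    simpa using h2

/-- Existence of `n`-th roots of positive elements in a real closed field. -/
lemma exists_root {K : Type*} [Field K] [LinearOrder K] [IsStrictOrderedRing K]
    (hsq : ∀ x : K, 0 < x → ∃ y : K, y ^ 2 = x)
    (hodd : ∀ p : Polynomial K, Odd p.natDegree → ∃ x : K, p.eval x = 0) :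
    ∀ n : ℕ, n ≠ 0 → ∀ x : K, 0 < x → ∃ r : K, 0 < r ∧ r ^ n = x := by
  intro n
  induction n using Nat.strong_induction_on with
  | _ n ih =>
    intro hn x hx
    rcases Nat.even_or_odd n with he | ho
    · obtain ⟨m, hm⟩ := he
      have hm0 : m ≠ 0 := by omega
      have hmlt : m < n := by omega
      obtain ⟨s, hs, hsm⟩ := ih m hmlt hm0 x hx
      obtain ⟨y, hy⟩ := hsq s hs
      have h2 : |y| ^ 2 = s := by rw [sq_abs, hy]
      have hy0 : |y| ≠ 0 := by
        intro h0
        rw [h0] at h2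
        simp at h2
        exact absurd h2.symm (ne_of_gt hs)
      refine ⟨|y|, lt_of_le_of_ne (abs_nonneg y) (Ne.symm hy0), ?_⟩
      calc |y| ^ n = (|y| ^ 2) ^ m := by rw [← pow_mul, hm, two_mul]
        _ = s ^ m := by rw [h2]
        _ = x := hsm
    · obtain ⟨r, hr⟩ := hodd (Polynomial.X ^ n - Polynomial.C x)
        (by rwa [Polynomial.natDegree_X_pow_sub_C])
      have hrn : r ^ n = x := by
        simp only [Polynomial.eval_sub, Polynomial.eval_pow, Polynomial.eval_X,
          Polynomial.eval_C] at hr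
        linarith
      refine ⟨r, ?_, hrn⟩
      by_contra hle
      push_neg at hle
      have : r ^ n ≤ 0 := Odd.pow_nonpos ho hle
      rw [hrn] at this; linarith

/-- A "rigid" candidate monomial group. -/
def Rigid {K : Type*} [Field K] [LinearOrder K] [IsStrictOrderedRing K] (M : Set K) : Prop :=
  (∀ m ∈ M, (0 : K) < m) ∧ (1 : K) ∈ M ∧
    (∀ m ∈ M, ∀ m' ∈ M, m * m' ∈ M) ∧ (∀ m ∈ M, m⁻¹ ∈ M) ∧
    (∀ m ∈ M, ∀ m' ∈ M, Asymp m m' → m = m')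

lemma Rigid.pow_mem {M : Set K} (hM : Rigid M) {m : K} (hm : m ∈ M) (q : ℕ) :
    m ^ q ∈ M := by
  induction q with
  | zero => simpa using hM.2.1
  | succ q ih => rw [pow_succ]; exact hM.2.2.1 _ ih _ hm

/-- Extension step: if `r > 0` is not asymptotic to `M`, and every power of `r`
which is asymptotic to `M` actually lies in `M`, then `M` together with `r`
generates a rigid group. -/
lemma rigid_extend {M : Set K} (hM : Rigid M) {r : K} (hr : 0 < r)
    (hna : ∀ m ∈ M, ¬ Asymp r m)
    (hpow : ∀ d : ℕ, d ≠ 0 → (∃ m ∈ M, Asymp (r ^ d) m) → r ^ d ∈ M) :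
    ∃ M' : Set K, Rigid M' ∧ M ⊆ M' ∧ r ∈ M' ∧ r ∉ M := by
  obtain ⟨hpos, hone, hmul, hinv, hrig⟩ := hM
  have hr0 : r ≠ 0 := ne_of_gt hr
  set M' : Set K := {x | ∃ m ∈ M, ∃ k : ℤ, x = m * r ^ k} with hM'
  have hsub : M ⊆ M' := fun m hm => ⟨m, hm, 0, by simp⟩
  have aux : ∀ m1 ∈ M, ∀ m2 ∈ M, ∀ k j : ℤ, j ≤ k →
      Asymp (m1 * r ^ k) (m2 * r ^ j) → m1 * r ^ k = m2 * r ^ j := by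
    intro m1 hm1 m2 hm2 k j hjk hxy
    have hm1' : (0:K) < m1 := hpos _ hm1
    have hm2' : (0:K) < m2 := hpos _ hm2
    have hm1ne : m1 ≠ 0 := ne_of_gt hm1'
    have hk' : r ^ k = r ^ (k - j) * r ^ j := by
      rw [← zpow_add₀ hr0, sub_add_cancel]
    have h1 : Asymp (r ^ (k - j) * m1) m2 := by
      refine Asymp.of_mul_right (zpow_ne_zero j hr0) ?_
      have e1 : r ^ (k - j) * m1 * r ^ j = m1 * r ^ k := by rw [hk']; ring
      rw [e1]; exact hxy
    have h2 : Asymp (r ^ (k - j)) (m2 * m1⁻¹) := by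
      refine Asymp.of_mul_right hm1ne ?_
      rw [inv_mul_cancel_right₀ hm1ne]
      exact h1
    have hM2 : m2 * m1⁻¹ ∈ M := hmul _ hm2 _ (hinv _ hm1)
    set d : ℕ := (k - j).toNat with hd
    have hdz : ((d : ℤ)) = k - j := Int.toNat_of_nonneg (by omega)
    have hrd : r ^ (k - j) = r ^ d := by rw [← hdz, zpow_natCast]
    rw [hrd] at h2
    rcases Nat.eq_zero_or_pos d with hd0 | hd1
    · have hkj : k = j := by omega
      subst hkj
      rw [hd0, pow_zero] at h2
      have h3 : (1:K) = m2 * m1⁻¹ := hrig _ hone _ hM2 h2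
      have hm : m1 = m2 := by field_simp at h3; linarith
      rw [hm]
    · have hrdM : r ^ d ∈ M := hpow d (by omega) ⟨m2 * m1⁻¹, hM2, h2⟩
      have heq : r ^ d = m2 * m1⁻¹ := hrig _ hrdM _ hM2 h2
      rw [hk', hrd, heq]
      field_simp
  refine ⟨M', ⟨?_, hsub hone, ?_, ?_, ?_⟩, hsub, ⟨1, hone, 1, by simp⟩, ?_⟩
  · rintro x ⟨m, hm, k, rfl⟩
    have := hpos m hm
    positivity
  · rintro x ⟨m, hm, k, rfl⟩ y ⟨m', hm', k', rfl⟩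
    exact ⟨m * m', hmul _ hm _ hm', k + k', by rw [zpow_add₀ hr0]; ring⟩
  · rintro x ⟨m, hm, k, rfl⟩
    refine ⟨m⁻¹, hinv _ hm, -k, ?_⟩
    rw [mul_inv, ← zpow_neg]
  · rintro x ⟨m1, hm1, k, rfl⟩ y ⟨m2, hm2, j, rfl⟩ hxy
    rcases le_total j k with h | h
    · exact aux m1 hm1 m2 hm2 k j h hxy
    · exact (aux m2 hm2 m1 hm1 j k h hxy.symm).symm
  · intro hrM
    exact hna r hrM (Asymp.refl r)

end Aux

/-- Every real closed field (every positive element has a square root and every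
polynomial of odd degree has a root) admits a group of monomials: a multiplicative
subgroup of the positive elements meeting each Archimedean class of `K^{≠0}` exactly
once. -/
theorem real_closed_field_has_monomial_group (K : Type*) [Field K] [LinearOrder K] [IsStrictOrderedRing K]
    (hsq : ∀ x : K, 0 < x → ∃ y : K, y ^ 2 = x)
    (hodd : ∀ p : Polynomial K, Odd p.natDegree → ∃ x : K, p.eval x = 0) :
    ∃ M : Set K, (∀ m ∈ M, (0 : K) < m) ∧ (1 : K) ∈ M ∧
      (∀ m ∈ M, ∀ m' ∈ M, m * m' ∈ M) ∧ (∀ m ∈ M, m⁻¹ ∈ M) ∧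
      (∀ f : K, f ≠ 0 → ∃! m, m ∈ M ∧ Asymp f m) := by
  classical
  -- Zorn's lemma furnishes a maximal rigid set
  have hzorn : ∃ M : Set K, Maximal Rigid M := by
    have hbase : Rigid ({1} : Set K) := by
      refine ⟨?_, rfl, ?_, ?_, ?_⟩
      · intro m hm; rw [Set.mem_singleton_iff] at hm; subst hm; exact zero_lt_one
      · intro m hm m' hm'; simp_all
      · intro m hm; simp_all
      · intro m hm m' hm' _; simp_all
    have hub : ∀ c ⊆ {M : Set K | Rigid M}, IsChain (· ⊆ ·) c → c.Nonempty →
        ∃ ub ∈ {M : Set K | Rigid M}, ∀ s ∈ c, s ⊆ ub := by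
      intro c hc hchain hne
      obtain ⟨s, hs⟩ := hne
      refine ⟨⋃₀ c, ⟨?_, ?_, ?_, ?_, ?_⟩, fun t ht => Set.subset_sUnion_of_mem ht⟩
      · rintro m ⟨t, ht, hmt⟩
        exact (hc ht).1 m hmt
      · exact ⟨s, hs, (hc hs).2.1⟩
      · rintro m ⟨t, ht, hmt⟩ m' ⟨t', ht', hmt'⟩
        rcases hchain.total ht ht' with h | h
        · exact ⟨t', ht', (hc ht').2.2.1 m (h hmt) m' hmt'⟩
        · exact ⟨t, ht, (hc ht).2.2.1 m hmt m' (h hmt')⟩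
      · rintro m ⟨t, ht, hmt⟩
        exact ⟨t, ht, (hc ht).2.2.2.1 m hmt⟩
      · rintro m ⟨t, ht, hmt⟩ m' ⟨t', ht', hmt'⟩ hmm
        rcases hchain.total ht ht' with h | h
        · exact (hc ht').2.2.2.2 m (h hmt) m' hmt' hmm
        · exact (hc ht).2.2.2.2 m hmt m' (h hmt') hmm
    obtain ⟨M, -, hmax⟩ := zorn_subset_nonempty {M : Set K | Rigid M} hub {1} hbase
    exact ⟨M, hmax⟩
  obtain ⟨M, hmax⟩ := hzorn
  have hM : Rigid M := hmax.1
  obtain ⟨hpos, hone, hmul, hinv, hrig⟩ := hM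
  have hMr : Rigid M := ⟨hpos, hone, hmul, hinv, hrig⟩
  -- Key claim: every positive element is asymptotic to some element of M
  have hmeet : ∀ f : K, 0 < f → ∃ m ∈ M, Asymp f m := by
    intro f hf
    by_contra hno
    push_neg at hno
    have hno' : ∀ m ∈ M, ¬ Asymp f m := hno
    have hf0 : f ≠ 0 := ne_of_gt hf
    by_cases hS : ∃ n : ℕ, n ≠ 0 ∧ ∃ m ∈ M, Asymp (f ^ n) m
    · -- take the minimal such n and extract an n-th root r of the witness m
      set n := Nat.find hS with hn
      obtain ⟨hn0, m, hm, hfm⟩ := Nat.find_spec hS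
      have hmpos : (0:K) < m := hpos _ hm
      obtain ⟨r, hrpos, hrn⟩ := exists_root hsq hodd n hn0 m hmpos
      have hr0 : r ≠ 0 := ne_of_gt hrpos
      have hm0 : m ≠ 0 := ne_of_gt hmpos
      -- f ≍ r
      have hg : Asymp (f * r⁻¹) 1 := by
        apply asymp_one_of_pow (by positivity) hn0
        have e : (f * r⁻¹) ^ n = f ^ n * m⁻¹ := by
          rw [mul_pow, inv_pow, hrn]
        rw [e]
        have := hfm.mul (Asymp.refl m⁻¹)
        rwa [mul_inv_cancel₀ hm0] at this
      have hfr : Asymp f r := by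
        have := hg.mul (Asymp.refl r)
        rwa [inv_mul_cancel_right₀ hr0, one_mul] at this
      -- r is not asymptotic to M
      have hnar : ∀ m' ∈ M, ¬ Asymp r m' := fun m' hm' h => hno' m' hm' (hfr.trans h)
      -- powers of r asymptotic to M lie in M
      have hpowr : ∀ d : ℕ, d ≠ 0 → (∃ m' ∈ M, Asymp (r ^ d) m') → r ^ d ∈ M := by
        rintro d hd ⟨m', hm', hdm⟩
        have hnpos : 0 < n := Nat.pos_of_ne_zero hn0
        have hdqt : d = n * (d / n) + d % n := (Nat.div_add_mod d n).symm
        set q := d / n with hq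
        set t := d % n with ht
        have htn : t < n := Nat.mod_lt _ hnpos
        have hrd : r ^ d = m ^ q * r ^ t := by
          rw [hdqt]
          rw [pow_add, pow_mul, hrn]
        by_cases ht0 : t = 0
        · rw [hrd, ht0, pow_zero, mul_one]
          exact hMr.pow_mem hm q
        · exfalso
          have hmq0 : m ^ q ≠ 0 := pow_ne_zero _ hm0
          have h1 : Asymp (r ^ t) (m' * (m ^ q)⁻¹) := by
            refine Asymp.of_mul_right hmq0 ?_
            rw [inv_mul_cancel_right₀ hmq0]
            rw [mul_comm]
            rw [← hrd]
            exact hdm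
          have h2 : Asymp (f ^ t) (m' * (m ^ q)⁻¹) := (hfr.pow t).trans h1
          have hM3 : m' * (m ^ q)⁻¹ ∈ M := hmul _ hm' _ (hinv _ (hMr.pow_mem hm q))
          exact Nat.find_min hS htn ⟨ht0, m' * (m ^ q)⁻¹, hM3, h2⟩
      obtain ⟨M', hM', hsub, hrM', hrM⟩ := rigid_extend hMr hrpos hnar hpowr
      exact hrM (hmax.2 hM' hsub hrM')
    · push_neg at hS
      have hpowf : ∀ d : ℕ, d ≠ 0 → (∃ m ∈ M, Asymp (f ^ d) m) → f ^ d ∈ M := by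
        rintro d hd ⟨m, hm, h⟩
        exact absurd h (hS d hd m hm)
      obtain ⟨M', hM', hsub, hfM', hfM⟩ := rigid_extend hMr hf hno' hpowf
      exact hfM (hmax.2 hM' hsub hfM')
  -- Assemble the final answer
  refine ⟨M, hpos, hone, hmul, hinv, ?_⟩
  intro f hf
  have hfabs : 0 < |f| := abs_pos.mpr hf
  obtain ⟨m, hm, hfm⟩ := hmeet |f| hfabs
  refine ⟨m, ⟨hm, (asymp_abs f).trans hfm⟩, ?_⟩
  rintro m' ⟨hm', hfm'⟩
  exact hrig m' hm' m hm (hfm'.symm.trans ((asymp_abs f).trans hfm))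
end

section
/- If x is an element of an ordered field with exponential E (an ordered group isomorphism (K,+,<) ≅ (K^{>0},·,<)) satisfying E(y) ≥ y + 1 for all y, then for every x greater than all natural numbers and every n ∈ ℕ, E(x) > xⁿ. -/
/-- If `E` is a strictly increasing homomorphism from `(K,+)` to `(K^{>0},·)` with
`E y ≥ y + 1` for all `y`, then `E x > xⁿ` for every `x` greater than all natural
numbers and every `n : ℕ`. -/
theorem exp_gt_pow_of_add_one_le {K : Type*} [Field K] [LinearOrder K] [IsStrictOrderedRing K] (E : K → K)
    (hpos : ∀ x : K, 0 < E x)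
    (hadd : ∀ x y : K, E (x + y) = E x * E y)
    (hmono : StrictMono E)
    (hge : ∀ y : K, y + 1 ≤ E y) :
    ∀ x : K, (∀ n : ℕ, (n : K) < x) → ∀ n : ℕ, x ^ n < E x := by
  have hE0 : E 0 = 1 := by
    have h := hadd 0 0
    simp only [add_zero] at h
    have h0 := hpos 0
    nlinarith
  have hpow : ∀ (k : ℕ) (y : K), E (k * y) = E y ^ k := by
    intro k y
    induction k with
    | zero => simpa using hE0
    | succ k ih =>
      push_cast
      rw [add_mul, one_mul, hadd, ih, pow_succ]
  intro x hx n
  set m := n + 1 with hm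
  have hmK : (0:K) < m := by positivity
  have hxc : ((m:K))^m < x := by
    have := hx (m^m)
    exact_mod_cast this
  have hx0 : (0:K) < x := lt_trans (by positivity) hxc
  have hEx : E x = E (x / m) ^ m := by
    rw [← hpow m (x/m)]
    congr 1
    field_simp
  have h1 : x / m + 1 ≤ E (x / m) := hge _
  have hq : (0:K) ≤ x / m := by positivity
  have h2 : (x/m)^m < (x/m+1)^m :=
    pow_lt_pow_left₀ (by linarith) hq (by omega)
  have h3 : (x/m+1)^m ≤ E (x/m) ^ m := pow_le_pow_left₀ (by positivity) h1 m
  have h4 : x^n < (x/m)^m := by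
    rw [div_pow, lt_div_iff₀ (by positivity)]
    calc x^n * (m:K)^m < x^n * x :=
          mul_lt_mul_of_pos_left hxc (by positivity)
      _ = x^m := (pow_succ x n).symm
  calc x^n < (x/m)^m := h4
    _ < (x/m+1)^m := h2
    _ ≤ E (x/m)^m := h3
    _ = E x := hEx.symm
end
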